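/- Let T be an infinite, locally finite, spherically symmetric rooted tree with no leaves: every vertex at distance n − 1 from the root o has exactly d_n ≥ 1 children. Let s > 0, κ₂ ≥ κ₁ > 0 and positive constants a_n, and let f_v = f_{|v|} : [0,∞) → [0,∞) depend only on |v| and satisfy a_{|v|} x / (1 + (κ₂ x)^s)^{1/s} ≤ f_v(x) ≤ a_{|v|} x / (1 + (κ₁ x)^s)^{1/s} for all v and x ≥ 0. Then there exists a nonzero family of nonnegative reals {x_v} satisfying x_v ≤ Σ_{v → w} f_w(x_w) for all v if and only if Σ_{n=1}^∞ Π_{j=1}^n (a_j d_j)^{-s} < ∞. -/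

import Mathlib

open scoped ENNReal Classical
noncomputable section
/-- Vertices of the canonical rooted tree: finite sequences of naturals; the root is `[]`. -/
abbrev Vtx := List ℕ
/-- Vertices of the tree determined by the child-count function `c`. -/
inductive IsVtx (c : Vtx → ℕ) : Vtx → Prop
  | root : IsVtx c []
  | child {v : Vtx} {i : ℕ} : IsVtx c v → i < c v → IsVtx c (v ++ [i])



lemma aux_pow_neg_s {s A κ t : ℝ} (hs : 0 < s) (hA : 0 < A) (hκ : 0 < κ) (ht : 0 < t) :
    (A * t / (1 + (κ * t) ^ s) ^ (1 / s)) ^ (-s) = A ^ (-s) * (t ^ (-s) + κ ^ s) := by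
  have hs' : s ≠ 0 := hs.ne'
  have hkt : (0:ℝ) ≤ (κ * t) ^ s := Real.rpow_nonneg (by positivity) _
  have hB : (0:ℝ) < 1 + (κ * t) ^ s := by linarith
  have hBp : (0:ℝ) < (1 + (κ * t) ^ s) ^ (1/s) := Real.rpow_pos_of_pos hB _
  rw [Real.div_rpow (by positivity) hBp.le, ← Real.rpow_mul hB.le]
  have h1 : (1/s) * (-s) = -1 := by field_simp
  rw [h1, Real.rpow_neg_one, Real.mul_rpow hA.le ht.le, Real.mul_rpow hκ.le ht.le]
  have h2 : t ^ (-s) * (κ ^ s * t ^ s) = κ ^ s := by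
    rw [mul_comm (κ ^ s), ← mul_assoc, ← Real.rpow_add ht]
    simp
  field_simp
  ring_nf
  nlinarith [h2, Real.rpow_pos_of_pos hA (-s)]

lemma aux_inv {s κ u : ℝ} (hs : 0 < s) (hκ : 0 < κ) (hu : 0 < u) :
    u ^ (-(1/s)) / (1 + (κ * u ^ (-(1/s))) ^ s) ^ (1 / s) = (u + κ ^ s) ^ (-(1/s)) := by
  have hs' : s ≠ 0 := hs.ne'
  have ht : (0:ℝ) < u ^ (-(1/s)) := Real.rpow_pos_of_pos hu _
  have h1 : (κ * u ^ (-(1/s))) ^ s = κ ^ s * u⁻¹ := by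
    rw [Real.mul_rpow hκ.le ht.le, ← Real.rpow_mul hu.le]
    have : -(1/s) * s = -1 := by field_simp
    rw [this, Real.rpow_neg_one]
  rw [h1]
  have h2 : 1 + κ ^ s * u⁻¹ = (u + κ ^ s) / u := by field_simp
  have hks : (0:ℝ) < κ ^ s := Real.rpow_pos_of_pos hκ _
  have hup : (0:ℝ) < u ^ (1/s) := Real.rpow_pos_of_pos hu _
  have hsum : (0:ℝ) < (u + κ ^ s) ^ (1/s) := Real.rpow_pos_of_pos (by positivity) _
  rw [h2, Real.div_rpow (by positivity) hu.le, Real.rpow_neg hu.le,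
    Real.rpow_neg (show (0:ℝ) ≤ u + κ ^ s by positivity)]
  rw [div_div_eq_mul_div]
  field_simp

lemma seqB (d : ℕ → ℕ) (hd : ∀ n, 1 ≤ d n) (s κ : ℝ) (hs : 0 < s) (hκ : 0 < κ)
    (a : ℕ → ℝ) (ha : ∀ n, 1 ≤ n → 0 < a n) (y : ℕ → ℝ) (hy0 : 0 < y 0)
    (hy : ∀ n, 0 ≤ y n)
    (hrec : ∀ n, y n ≤ (d (n+1) : ℝ) * (a (n+1) * y (n+1) / (1 + (κ * y (n+1)) ^ s) ^ (1/s))) :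
    Summable (fun n : ℕ => ∏ j ∈ Finset.Icc 1 (n+1), ((a j * (d j : ℝ)) ^ s)⁻¹) := by
  have hs' : s ≠ 0 := hs.ne'
  have hA : ∀ n : ℕ, (0:ℝ) < a (n+1) * d (n+1) := fun n => by
    have := ha (n+1) (Nat.le_add_left 1 n)
    have := hd (n+1)
    positivity
  -- positivity of y
  have hpos : ∀ n, 0 < y n := by
    intro n
    induction n with
    | zero => exact hy0
    | succ n ih =>
      rcases (hy (n+1)).lt_or_eq with h | h
      · exact h
      · exfalso
        have h2 := hrec n
        rw [← h, mul_zero, zero_div, mul_zero] at h2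
        linarith
  -- rewrite hrec
  have hrec' : ∀ n, y n ≤ (a (n+1) * d (n+1)) * y (n+1) / (1 + (κ * y (n+1)) ^ s) ^ (1/s) := by
    intro n
    have h := hrec n
    calc y n ≤ _ := h
      _ = _ := by ring
  set u : ℕ → ℝ := fun n => y n ^ (-s) with hu
  have upos : ∀ n, 0 < u n := fun n => Real.rpow_pos_of_pos (hpos n) _
  have key : ∀ n, (a (n+1) * d (n+1)) ^ (-s) * (u (n+1) + κ ^ s) ≤ u n := by
    intro n
    have h := hrec' n
    have h2 : ((a (n+1) * d (n+1)) * y (n+1) / (1 + (κ * y (n+1)) ^ s) ^ (1/s)) ^ (-s)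
        ≤ y n ^ (-s) := by
      have hkt : (0:ℝ) ≤ (κ * y (n+1)) ^ s := Real.rpow_nonneg (mul_nonneg hκ.le (hy _)) _
      have hBp : (0:ℝ) < (1 + (κ * y (n+1)) ^ s) ^ (1/s) :=
        Real.rpow_pos_of_pos (by linarith) _
      rw [Real.rpow_neg (div_pos (mul_pos (hA n) (hpos (n+1))) hBp).le,
        Real.rpow_neg (hpos n).le]
      have hb : (0:ℝ) < y n ^ s := Real.rpow_pos_of_pos (hpos n) _
      exact inv_anti₀ hb (Real.rpow_le_rpow (hpos n).le h hs.le)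
    rwa [aux_pow_neg_s hs (hA n) hκ (hpos (n+1))] at h2
  set Q : ℕ → ℝ := fun j => (a (j+1) * d (j+1)) ^ (-s) with hQ
  have Qpos : ∀ j, 0 < Q j := fun j => Real.rpow_pos_of_pos (hA j) _
  have claim : ∀ N, (∑ m ∈ Finset.range N, κ ^ s * ∏ j ∈ Finset.range (m+1), Q j)
      + (∏ j ∈ Finset.range N, Q j) * u N ≤ u 0 := by
    intro N
    induction N with
    | zero => simp
    | succ N ih =>
      have hk := key N
      have hprod : (0:ℝ) < ∏ j ∈ Finset.range N, Q j := Finset.prod_pos fun j _ => Qpos j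
      have h3 : (∏ j ∈ Finset.range N, Q j) * (Q N * (u (N+1) + κ ^ s))
          ≤ (∏ j ∈ Finset.range N, Q j) * u N := by
        exact mul_le_mul_of_nonneg_left hk hprod.le
      rw [Finset.sum_range_succ, Finset.prod_range_succ]
      nlinarith [h3]
  have bound : ∀ N, ∑ m ∈ Finset.range N, κ ^ s * ∏ j ∈ Finset.range (m+1), Q j ≤ u 0 := by
    intro N
    have hprod : (0:ℝ) < ∏ j ∈ Finset.range N, Q j := Finset.prod_pos fun j _ => Qpos j
    have := claim N
    nlinarith [upos N]
  have hks : (0:ℝ) < κ ^ s := Real.rpow_pos_of_pos hκ _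
  have hp_eq : ∀ n : ℕ, (∏ j ∈ Finset.Icc 1 (n+1), ((a j * (d j : ℝ)) ^ s)⁻¹)
      = ∏ j ∈ Finset.range (n+1), Q j := by
    intro n
    rw [← Finset.Ico_add_one_right_eq_Icc, Finset.prod_Ico_eq_prod_range]
    apply Finset.prod_congr (by norm_num)
    intro i _
    simp only [hQ]
    rw [Real.rpow_neg (hA i).le, add_comm 1 i]
  apply summable_of_sum_range_le (c := u 0 / κ ^ s)
  · intro n
    rw [hp_eq]
    exact (Finset.prod_pos fun j _ => Qpos j).le
  · intro N
    rw [le_div_iff₀ hks]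
    calc (∑ n ∈ Finset.range N, ∏ j ∈ Finset.Icc 1 (n+1), ((a j * (d j:ℝ)) ^ s)⁻¹) * κ ^ s
        = ∑ m ∈ Finset.range N, κ ^ s * ∏ j ∈ Finset.range (m+1), Q j := by
          rw [Finset.sum_mul]
          exact Finset.sum_congr rfl fun m _ => by rw [hp_eq]; ring
      _ ≤ u 0 := bound N

lemma seqA (d : ℕ → ℕ) (hd : ∀ n, 1 ≤ d n) (s κ : ℝ) (hs : 0 < s) (hκ : 0 < κ)
    (a : ℕ → ℝ) (ha : ∀ n, 1 ≤ n → 0 < a n)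
    (hsum : Summable (fun n : ℕ => ∏ j ∈ Finset.Icc 1 (n+1), ((a j * (d j : ℝ)) ^ s)⁻¹)) :
    ∃ y : ℕ → ℝ, (∀ n, 0 < y n) ∧
      ∀ n, y n = (d (n+1) : ℝ) * (a (n+1) * y (n+1) / (1 + (κ * y (n+1)) ^ s) ^ (1/s)) := by
  have hs' : s ≠ 0 := hs.ne'
  have hA : ∀ n : ℕ, 1 ≤ n → (0:ℝ) < a n * d n := fun n hn => by
    have := ha n hn; have := hd n; positivity
  set Q : ℕ → ℝ := fun j => (a j * (d j : ℝ)) ^ (-s) with hQdef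
  have Qpos : ∀ j, 1 ≤ j → 0 < Q j := fun j hj => Real.rpow_pos_of_pos (hA j hj) _
  set P : ℕ → ℝ := fun n => ∏ j ∈ Finset.Icc 1 (n+1), Q j with hPdef
  have Ppos : ∀ n, 0 < P n :=
    fun n => Finset.prod_pos fun j hj => Qpos j (Finset.mem_Icc.mp hj).1
  have hPeq : ∀ n, (∏ j ∈ Finset.Icc 1 (n+1), ((a j * (d j : ℝ)) ^ s)⁻¹) = P n := by
    intro n
    refine Finset.prod_congr rfl fun j hj => ?_
    show ((a j * (d j : ℝ)) ^ s)⁻¹ = (a j * (d j : ℝ)) ^ (-s)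
    rw [Real.rpow_neg (hA j (Finset.mem_Icc.mp hj).1).le]
  have hsumP : Summable P := hsum.congr hPeq
  set C : ℕ → ℝ := fun n => ∏ j ∈ Finset.Icc 1 n, Q j with hCdef
  have Cpos : ∀ n, 0 < C n :=
    fun n => Finset.prod_pos fun j hj => Qpos j (Finset.mem_Icc.mp hj).1
  have hCsucc : ∀ n, C (n+1) = C n * Q (n+1) := by
    intro n
    exact Finset.prod_Icc_succ_top (Nat.le_add_left 1 n) Q
  have hPC : ∀ n, P n = C (n+1) := fun n => rfl
  have hsum_shift : ∀ n : ℕ, Summable (fun m => P (n + m)) := by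
    intro n
    exact ((summable_nat_add_iff n).mpr hsumP).congr (fun m => by rw [add_comm])
  set T : ℕ → ℝ := fun n => ∑' m, P (n + m) with hTdef
  have Tpos : ∀ n, 0 < T n :=
    fun n => Summable.tsum_pos (hsum_shift n) (fun m => (Ppos _).le) 0 (Ppos _)
  have hTrec : ∀ n, T n = P n + T (n+1) := by
    intro n
    calc T n = ∑' m, P (n + m) := rfl
      _ = P (n + 0) + ∑' m, P (n + (m + 1)) := Summable.tsum_eq_zero_add (hsum_shift n)
      _ = P n + T (n + 1) := by
          rw [add_zero]
          congr 1
          exact tsum_congr fun m => by congr 1; omega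
  set u : ℕ → ℝ := fun n => (C n)⁻¹ * (κ ^ s * T n) with hudef
  have upos : ∀ n, 0 < u n := fun n =>
    mul_pos (inv_pos.mpr (Cpos n)) (mul_pos (Real.rpow_pos_of_pos hκ _) (Tpos n))
  have hurec : ∀ n, u n = Q (n+1) * (κ ^ s + u (n+1)) := by
    intro n
    rw [hudef]
    simp only
    rw [hTrec n, hPC n, hCsucc n]
    have h1 : C n ≠ 0 := (Cpos n).ne'
    have h2 : Q (n+1) ≠ 0 := (Qpos (n+1) (Nat.le_add_left 1 n)).ne'
    field_simp
  refine ⟨fun n => u n ^ (-(1/s)), fun n => Real.rpow_pos_of_pos (upos n) _, ?_⟩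
  intro n
  simp only
  rw [mul_div_assoc, aux_inv hs hκ (upos (n+1)), hurec n]
  have hQn := Qpos (n+1) (Nat.le_add_left 1 n)
  have hks : (0:ℝ) < κ ^ s := Real.rpow_pos_of_pos hκ _
  have h2 : (0:ℝ) < κ ^ s + u (n+1) := add_pos hks (upos (n+1))
  rw [Real.mul_rpow hQn.le h2.le]
  have h3 : Q (n+1) ^ (-(1/s)) = a (n+1) * d (n+1) := by
    show ((a (n+1) * (d (n+1) : ℝ)) ^ (-s)) ^ (-(1/s)) = _
    rw [← Real.rpow_mul (hA (n+1) (Nat.le_add_left 1 n)).le]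
    rw [show (-s) * (-(1/s)) = 1 by field_simp, Real.rpow_one]
  rw [h3, add_comm (κ ^ s)]
  ring

/-- The spherically symmetric tree in which every vertex at distance `n - 1` from the root
has exactly `d n` children: a vertex at distance `k` has `d (k+1)` children. -/
theorem stmt11 (d : ℕ → ℕ) (hd : ∀ n, 1 ≤ d n)
    (s : ℝ) (hs : 0 < s) (κ₁ κ₂ : ℝ) (hκ₁ : 0 < κ₁) (hκ₁₂ : κ₁ ≤ κ₂)
    (a : ℕ → ℝ) (ha : ∀ n : ℕ, 1 ≤ n → 0 < a n)
    (f : ℕ → ℝ → ℝ)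
    (hf : ∀ n : ℕ, 1 ≤ n → ∀ x : ℝ, 0 ≤ x →
      a n * x / (1 + (κ₂ * x) ^ s) ^ (1 / s) ≤ f n x ∧
        f n x ≤ a n * x / (1 + (κ₁ * x) ^ s) ^ (1 / s)) :
    (∃ x : Vtx → ℝ,
        (∀ v, IsVtx (fun v => d (v.length + 1)) v → 0 ≤ x v) ∧
        (∃ v, IsVtx (fun v => d (v.length + 1)) v ∧ x v ≠ 0) ∧
        ∀ v, IsVtx (fun v => d (v.length + 1)) v →
          x v ≤ ∑ i ∈ Finset.range (d (v.length + 1)),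
            f (v.length + 1) (x (v ++ [i]))) ↔
      Summable (fun n : ℕ =>
        ∏ j ∈ Finset.Icc 1 (n + 1), ((a j * (d j : ℝ)) ^ s)⁻¹) := by
  have hκ₂ : 0 < κ₂ := lt_of_lt_of_le hκ₁ hκ₁₂
  constructor
  · rintro ⟨x, hx0, ⟨v₀, hv₀, hxne⟩, hineq⟩
    have H : ∀ v : Vtx, ∃ i, i < d (v.length + 1) ∧
        ∀ j, j < d (v.length + 1) →
          f (v.length + 1) (x (v ++ [j])) ≤ f (v.length + 1) (x (v ++ [i])) := by
      intro v
      obtain ⟨i, hi, hmax⟩ := Finset.exists_max_image (Finset.range (d (v.length+1)))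
        (fun j => f (v.length+1) (x (v ++ [j]))) ⟨0, Finset.mem_range.mpr (hd _)⟩
      exact ⟨i, Finset.mem_range.mp hi, fun j hj => hmax j (Finset.mem_range.mpr hj)⟩
    choose nxt hlt hmax using H
    obtain ⟨V, hV0, hVs⟩ : ∃ V : ℕ → Vtx, V 0 = v₀ ∧ ∀ m, V (m+1) = V m ++ [nxt (V m)] :=
      ⟨fun m => Nat.rec v₀ (fun _ w => w ++ [nxt w]) m, rfl, fun _ => rfl⟩
    set k := v₀.length with hk
    have hlen : ∀ m, (V m).length = k + m := by
      intro m
      induction m with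
      | zero => simp [hV0]; rfl
      | succ m ih => rw [hVs]; simp [ih]; omega
    have hIs : ∀ m, IsVtx (fun v => d (v.length + 1)) (V m) := by
      intro m
      induction m with
      | zero => rw [hV0]; exact hv₀
      | succ m ih => rw [hVs]; exact IsVtx.child ih (hlt (V m))
    have hxpos0 : 0 < x (V 0) := by
      rw [hV0]; exact lt_of_le_of_ne (hx0 v₀ hv₀) (Ne.symm hxne)
    have hy : ∀ m, 0 ≤ x (V m) := fun m => hx0 _ (hIs m)
    have hchain : ∀ m, x (V m) ≤ (d (k + m + 1) : ℝ) *
        (a (k + m + 1) * x (V (m+1)) / (1 + (κ₁ * x (V (m+1))) ^ s) ^ (1/s)) := by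
      intro m
      have h1 := hineq (V m) (hIs m)
      have h2 : ∑ i ∈ Finset.range (d ((V m).length + 1)),
            f ((V m).length+1) (x (V m ++ [i]))
          ≤ (d ((V m).length + 1) : ℝ) * f ((V m).length+1) (x (V (m+1))) := by
        rw [hVs]
        calc ∑ i ∈ Finset.range (d ((V m).length + 1)), f ((V m).length+1) (x (V m ++ [i]))
            ≤ ∑ _i ∈ Finset.range (d ((V m).length + 1)),
                f ((V m).length+1) (x (V m ++ [nxt (V m)])) :=
              Finset.sum_le_sum fun i hi => hmax (V m) i (Finset.mem_range.mp hi)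
          _ = _ := by rw [Finset.sum_const, Finset.card_range, nsmul_eq_mul]
      have h3 : f ((V m).length+1) (x (V (m+1)))
          ≤ a ((V m).length+1) * x (V (m+1)) / (1 + (κ₁ * x (V (m+1))) ^ s) ^ (1/s) :=
        (hf _ (Nat.le_add_left 1 _) _ (hy (m+1))).2
      have h4 : (d ((V m).length + 1) : ℝ) * f ((V m).length+1) (x (V (m+1)))
          ≤ (d ((V m).length + 1) : ℝ) *
            (a ((V m).length+1) * x (V (m+1)) / (1 + (κ₁ * x (V (m+1))) ^ s) ^ (1/s)) :=
        mul_le_mul_of_nonneg_left h3 (Nat.cast_nonneg _)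
      have := le_trans h1 (le_trans h2 h4)
      rwa [hlen m] at this
    have hsum' := seqB (fun j => d (k + j)) (fun n => hd _) s κ₁ hs hκ₁
      (fun j => a (k + j)) (fun n hn => ha (k + n) (le_trans hn (Nat.le_add_left n k)))
      (fun m => x (V m)) hxpos0 hy (fun m => hchain m)
    -- convert
    apply (summable_nat_add_iff (f := fun n : ℕ =>
      ∏ j ∈ Finset.Icc 1 (n + 1), ((a j * (d j : ℝ)) ^ s)⁻¹) k).mp
    have key : ∀ n : ℕ, (∏ j ∈ Finset.Icc 1 (n + k + 1), ((a j * (d j : ℝ)) ^ s)⁻¹)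
        = (∏ j ∈ Finset.Icc 1 k, ((a j * (d j : ℝ)) ^ s)⁻¹) *
          ∏ j ∈ Finset.Icc 1 (n+1), ((a (k+j) * (d (k+j) : ℝ)) ^ s)⁻¹ := by
      intro n
      have hshift : ∏ j ∈ Finset.Icc (k+1) (k+(n+1)), ((a j * (d j : ℝ)) ^ s)⁻¹
          = ∏ i ∈ Finset.Icc 1 (n+1), ((a (k+i) * (d (k+i) : ℝ)) ^ s)⁻¹ := by
        rw [← Finset.map_add_left_Icc, Finset.prod_map]; rfl
      calc ∏ j ∈ Finset.Icc 1 (n+k+1), ((a j * (d j : ℝ)) ^ s)⁻¹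
          = ∏ j ∈ Finset.Ioc 0 (n+k+1), ((a j * (d j : ℝ)) ^ s)⁻¹ := by
            rw [← Finset.Icc_add_one_left_eq_Ioc, zero_add]
        _ = (∏ j ∈ Finset.Ioc 0 k, ((a j * (d j : ℝ)) ^ s)⁻¹) *
            ∏ j ∈ Finset.Ioc k (n+k+1), ((a j * (d j : ℝ)) ^ s)⁻¹ :=
            (Finset.prod_Ioc_consecutive _ (Nat.zero_le k) (by omega)).symm
        _ = (∏ j ∈ Finset.Icc 1 k, ((a j * (d j : ℝ)) ^ s)⁻¹) *
            ∏ j ∈ Finset.Icc (k+1) (k+(n+1)), ((a j * (d j : ℝ)) ^ s)⁻¹ := by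
            rw [show k+(n+1) = n+k+1 from by omega, ← Finset.Icc_add_one_left_eq_Ioc, ← Finset.Icc_add_one_left_eq_Ioc, zero_add]
        _ = _ := by rw [hshift]
    exact ((hsum'.mul_left _).congr (fun n => (key n).symm))
  · intro hsum
    obtain ⟨y, ypos, yrec⟩ := seqA d hd s κ₂ hs hκ₂ a ha hsum
    refine ⟨fun v => y v.length, fun v _ => (ypos _).le, ⟨[], IsVtx.root, (ypos 0).ne'⟩, ?_⟩
    intro v _
    simp only [List.length_append, List.length_cons, List.length_nil]
    have hterm : ∀ i ∈ Finset.range (d (v.length + 1)),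
        a (v.length+1) * y (v.length+1) / (1 + (κ₂ * y (v.length+1)) ^ s) ^ (1/s)
          ≤ f (v.length + 1) (y (v.length + 1)) := fun i _ =>
      (hf _ (Nat.le_add_left 1 _) _ (ypos _).le).1
    calc y v.length
        = (d (v.length+1) : ℝ) * (a (v.length+1) * y (v.length+1) /
            (1 + (κ₂ * y (v.length+1)) ^ s) ^ (1/s)) := yrec v.length
      _ ≤ (d (v.length+1) : ℝ) * f (v.length + 1) (y (v.length + 1)) :=
          mul_le_mul_of_nonneg_left (hterm 0 (Finset.mem_range.mpr (hd _))) (Nat.cast_nonneg _)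
      _ = ∑ _i ∈ Finset.range (d (v.length + 1)), f (v.length + 1) (y (v.length + 1)) := by
          rw [Finset.sum_const, Finset.card_range, nsmul_eq_mul]
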